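/- Let V be a real inner product space, and let a : V × V → ℝ be a symmetric positive semidefinite bilinear form satisfying the Poincaré-type inequality ‖v‖² ≤ C₀ a(v,v) for all v ∈ V, where C₀ > 0. Let τ > 0, θ ∈ [1/2, 1], N ≥ 1, and let u⁰, u¹, …, u^N and F¹, …, F^N in V satisfy, for each n = 1, …, N and every v ∈ V, ⟪(uⁿ - u^{n-1})/τ, v⟫ + a(θ uⁿ + (1-θ) u^{n-1}, v) = ⟪Fⁿ, v⟫. Then ‖u^N‖² ≤ ‖u⁰‖² + (C₀ τ / 2) Σ_{j=1}^{N} ‖F^j‖². -/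

import Mathlib

open scoped RealInnerProductSpace

/-- Discrete stability of the implicit θ-scheme, `θ ∈ [1/2, 1]`:
`‖u^N‖² ≤ ‖u⁰‖² + (C₀ τ / 2) Σ_{j=1}^N ‖F^j‖²`. -/
theorem theta_scheme_stability_squared
    {V : Type*} [NormedAddCommGroup V] [InnerProductSpace ℝ V]
    (a : V →ₗ[ℝ] V →ₗ[ℝ] ℝ)
    (hsym : ∀ x y : V, a x y = a y x)
    (hpos : ∀ v : V, 0 ≤ a v v)
    (C₀ : ℝ) (hC₀ : 0 < C₀)
    (hpoincare : ∀ v : V, ‖v‖ ^ 2 ≤ C₀ * a v v)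
    (τ θ : ℝ) (hτ : 0 < τ) (hθ : θ ∈ Set.Icc (1 / 2 : ℝ) 1)
    (N : ℕ) (hN : 1 ≤ N) (u F : ℕ → V)
    (hscheme : ∀ n, 1 ≤ n → n ≤ N → ∀ v : V,
      ⟪(1 / τ) • (u n - u (n - 1)), v⟫ + a (θ • u n + (1 - θ) • u (n - 1)) v
        = ⟪F n, v⟫) :
    ‖u N‖ ^ 2 ≤ ‖u 0‖ ^ 2 + (C₀ * τ / 2) * ∑ j ∈ Finset.Icc 1 N, ‖F j‖ ^ 2 := by
  obtain ⟨hθ1, hθ2⟩ := hθ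
  have key : ∀ n, 1 ≤ n → n ≤ N →
      ‖u n‖ ^ 2 ≤ ‖u (n - 1)‖ ^ 2 + (C₀ * τ / 2) * ‖F n‖ ^ 2 := by
    intro n h1 h2
    set w : V := θ • u n + (1 - θ) • u (n - 1) with hw
    have hs := hscheme n h1 h2 w
    have haw := hpos w
    have hpw := hpoincare w
    have hFw : ⟪F n, w⟫ ≤ ‖F n‖ * ‖w‖ := real_inner_le_norm _ _
    have hdw : ⟪u n - u (n - 1), w⟫
        = θ * ‖u n‖ ^ 2 + (1 - 2 * θ) * ⟪u n, u (n - 1)⟫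
          - (1 - θ) * ‖u (n - 1)‖ ^ 2 := by
      simp only [hw, inner_sub_left, inner_add_right, real_inner_smul_right,
        real_inner_self_eq_norm_sq, real_inner_comm (u (n - 1)) (u n)]
      ring
    rw [real_inner_smul_left, hdw] at hs
    have hd : (0:ℝ) ≤ ‖u n‖ ^ 2 - 2 * ⟪u n, u (n - 1)⟫ + ‖u (n - 1)‖ ^ 2 := by
      have h := norm_sub_sq_real (u n) (u (n - 1))
      nlinarith [sq_nonneg ‖u n - u (n - 1)‖]
    have hAM : ‖F n‖ * ‖w‖ ≤ (C₀ / 4) * ‖F n‖ ^ 2 + (1 / C₀) * ‖w‖ ^ 2 := by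
      rw [← mul_le_mul_iff_right₀ hC₀]
      have h := sq_nonneg (‖w‖ - (C₀ / 2) * ‖F n‖)
      have he : C₀ * ((C₀ / 4) * ‖F n‖ ^ 2 + (1 / C₀) * ‖w‖ ^ 2)
          = (C₀ ^ 2 / 4) * ‖F n‖ ^ 2 + ‖w‖ ^ 2 := by
        field_simp
      rw [he]; nlinarith
    have hwa : (1 / C₀) * ‖w‖ ^ 2 ≤ a w w := by
      rw [div_mul_eq_mul_div, one_mul, div_le_iff₀ hC₀]
      nlinarith
    have h3 : (θ * ‖u n‖ ^ 2 + (1 - 2 * θ) * ⟪u n, u (n - 1)⟫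
        - (1 - θ) * ‖u (n - 1)‖ ^ 2) / τ ≤ (C₀ / 4) * ‖F n‖ ^ 2 := by
      rw [div_eq_inv_mul, ← one_div]
      linarith
    have h4 : θ * ‖u n‖ ^ 2 + (1 - 2 * θ) * ⟪u n, u (n - 1)⟫
        - (1 - θ) * ‖u (n - 1)‖ ^ 2 ≤ ((C₀ / 4) * ‖F n‖ ^ 2) * τ :=
      (div_le_iff₀ hτ).mp h3
    have hmul : (0:ℝ) ≤ (θ - 1 / 2) *
        (‖u n‖ ^ 2 - 2 * ⟪u n, u (n - 1)⟫ + ‖u (n - 1)‖ ^ 2) :=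
      mul_nonneg (by linarith) hd
    nlinarith [h4, hmul]
  have main : ∀ n, n ≤ N →
      ‖u n‖ ^ 2 ≤ ‖u 0‖ ^ 2 + (C₀ * τ / 2) * ∑ j ∈ Finset.Icc 1 n, ‖F j‖ ^ 2 := by
    intro n
    induction n with
    | zero => simp
    | succ m ih =>
      intro hle
      have h1 := ih (le_trans (Nat.le_succ m) hle)
      have h2 := key (m + 1) (Nat.succ_le_succ (Nat.zero_le m)) hle
      simp only [Nat.add_sub_cancel] at h2
      rw [Finset.sum_Icc_succ_top (by omega : 1 ≤ m + 1), mul_add]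
      linarith
  exact main N le_rfl
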